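/- arXiv:math/9902048 — 2 statements merged into one kernel-verified Lean document; each statement's English description precedes it below -/
import Mathlib

section
/- Let m be an even integer and G = C_m the cyclic group of order m with generator x. Then 𝔹_G is a free abelian group of rank m/2 − 1, and the elements [x, x^i, x^{m−i−1}] for i = 1,…,m/2 − 1 form a ℤ-basis of 𝔹_G. -/
namespace SingOrbit

variable (G : Type*) [Group G]

/-- The map from conjugacy classes to the abelianization. -/
def classAb : ConjClasses G → Additive (Abelianization G) :=
  Quotient.lift (fun g : G => Additive.ofMul (Abelianization.of g)) <| by
    intro a b hab
    obtain ⟨c, hc⟩ := isConj_iff.mp (hab : IsConj a b)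
    subst hc
    show Additive.ofMul (Abelianization.of a) = Additive.ofMul (Abelianization.of (c * a * c⁻¹))
    congr 1
    rw [map_mul, map_mul, map_inv, mul_comm (Abelianization.of c) (Abelianization.of a),
      mul_inv_cancel_right]

/-- Nontrivial conjugacy classes. -/
def NCC := {c : ConjClasses G // c ≠ 1}

/-- The homomorphism `φ` from the free abelian group on the nontrivial conjugacy classes
to the abelianization, sending a conjugacy class to the image of any representative. -/
noncomputable def phi : FreeAbelianGroup (NCC G) →+ Additive (Abelianization G) :=
  FreeAbelianGroup.lift fun c => classAb G c.1

/-- The basis element of the free abelian group corresponding to a conjugacy class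
(`0` for the trivial class). -/
noncomputable def clsC (c : ConjClasses G) : FreeAbelianGroup (NCC G) :=
  letI := Classical.dec (c = 1)
  if h : c = 1 then 0 else FreeAbelianGroup.of ⟨c, h⟩

/-- The basis element corresponding to the conjugacy class of a group element. -/
noncomputable def clsF (x : G) : FreeAbelianGroup (NCC G) := clsC G (ConjClasses.mk x)

/-- The subgroup generated by the elements `x̂ + x̂⁻¹`. -/
noncomputable def NSub : AddSubgroup (FreeAbelianGroup (NCC G)) :=
  AddSubgroup.closure {a | ∃ x : G, a = clsF G x + clsF G x⁻¹}

/-- The group `𝔹_G` of singular orbit data: `(ker φ) / N`. -/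
noncomputable def SOD := (phi G).ker ⧸ ((NSub G).addSubgroupOf (phi G).ker)

noncomputable instance : AddCommGroup (SOD G) :=
  inferInstanceAs (AddCommGroup ((phi G).ker ⧸ ((NSub G).addSubgroupOf (phi G).ker)))

variable {G}

lemma classAb_mk (x : G) :
    classAb G (ConjClasses.mk x) = Additive.ofMul (Abelianization.of x) := rfl

lemma mk_eq_one_iff {x : G} : ConjClasses.mk x = 1 ↔ x = 1 := by
  rw [ConjClasses.one_eq_mk_one, ConjClasses.mk_eq_mk_iff_isConj, isConj_one_left]

lemma phi_of (c : NCC G) : phi G (FreeAbelianGroup.of c) = classAb G c.1 :=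
  FreeAbelianGroup.lift_apply_of _ _

lemma phi_clsF (x : G) : phi G (clsF G x) = Additive.ofMul (Abelianization.of x) := by
  rw [clsF, clsC]
  split_ifs with h
  · have hx : x = 1 := mk_eq_one_iff.mp h
    subst hx
    simp
  · exact (phi_of (G := G) ⟨_, h⟩).trans (classAb_mk x)

/-- The element of the free abelian group associated to a list of group elements. -/
noncomputable def sumF (l : List G) : FreeAbelianGroup (NCC G) := (l.map (clsF G)).sum

lemma sumF_nil : sumF ([] : List G) = 0 := rfl

lemma sumF_cons (a : G) (t : List G) : sumF (a :: t) = clsF G a + sumF t := by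
  simp [sumF]

lemma phi_sumF (l : List G) :
    phi G (sumF l) = Additive.ofMul (Abelianization.of l.prod) := by
  induction l with
  | nil => simp [sumF_nil]
  | cons a t ih =>
    rw [sumF_cons, map_add, phi_clsF, ih, List.prod_cons, map_mul, ofMul_mul]

lemma abOf_eq_one_iff {x : G} : Abelianization.of x = 1 ↔ x ∈ commutator G :=
  QuotientGroup.eq_one_iff x

lemma sumF_mem_ker {l : List G} (h : l.prod ∈ commutator G) : sumF l ∈ (phi G).ker := by
  rw [AddMonoidHom.mem_ker, phi_sumF, abOf_eq_one_iff.mpr h]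
  rfl

/-- The singular orbit datum `[x̂₁, …, x̂_q]` associated to a list of group elements whose
product lies in the commutator subgroup. -/
noncomputable def data (l : List G) (h : l.prod ∈ commutator G) : SOD G :=
  (QuotientAddGroup.mk ⟨sumF l, sumF_mem_ker h⟩ : SOD G)

lemma triple_pow_mem {G : Type*} [Group G] {x : G} {n a b : ℕ}
    (hx : x ^ n = 1) (h : 1 + a + b = n) :
    ([x, x ^ a, x ^ b] : List G).prod ∈ commutator G := by
  have hprod : ([x, x ^ a, x ^ b] : List G).prod = 1 := by
    have h1 : ([x, x ^ a, x ^ b] : List G).prod = x ^ (1 + a + b) := by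
      simp [pow_add, mul_assoc]
    rw [h1, h, hx]
  rw [hprod]
  exact Subgroup.one_mem _

section Aux

variable {G : Type*} [Group G]

lemma homext {A : Type*} [AddCommGroup A] {α : Type*} (f g : FreeAbelianGroup α →+ A)
    (h : ∀ c, f (FreeAbelianGroup.of c) = g (FreeAbelianGroup.of c)) (v : FreeAbelianGroup α) :
    f v = g v := by
  refine FreeAbelianGroup.induction_on v (by simp) h (fun c hc => by simp [map_neg, hc])
    (fun a b ha hb => by simp [map_add, ha, hb])

/-- discrete log with respect to x, valued in ZMod m -/
noncomputable def ell (m : ℕ) (x : G) (g : G) : ZMod m :=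
  Function.invFun (fun j : ZMod m => x ^ j.val) g

noncomputable def sHom (m : ℕ) (x : G) : FreeAbelianGroup (NCC G) →+ ℤ :=
  FreeAbelianGroup.lift fun c => ((ell m x (Quotient.out c.1)).val : ℤ)

def uu (m r n : ℕ) : Fin r → ℤ :=
  fun k => (if (k : ℕ) + 1 < n then 1 else 0) + (if m - n ≤ (k : ℕ) + 1 then 1 else 0)

noncomputable def UHom (m r : ℕ) (x : G) : FreeAbelianGroup (NCC G) →+ (Fin r → ℤ) :=
  FreeAbelianGroup.lift fun c => uu m r (ell m x (Quotient.out c.1)).val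

noncomputable def PhiNum (m r : ℕ) (x : G) : FreeAbelianGroup (NCC G) →+ (Fin r → ℤ) :=
  AddMonoidHom.mk' (fun v k => sHom m x v - ((m / 2 : ℕ) : ℤ) * UHom m r x v k) (by
    intro a b
    funext k
    simp only [map_add, Pi.add_apply]
    ring)

lemma PhiNum_apply (m r : ℕ) (x : G) (v : FreeAbelianGroup (NCC G)) (k : Fin r) :
    PhiNum m r x v k = sHom m x v - ((m / 2 : ℕ) : ℤ) * UHom m r x v k := rfl

section WithHyp

variable {m : ℕ} {x : G} (hgen : ∀ g : G, g ∈ Subgroup.zpowers x) (hord : orderOf x = m)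
  (hm0 : 0 < m)

include hgen in
lemma comm_of_gen (a b : G) : a * b = b * a := by
  obtain ⟨p, rfl⟩ := hgen a
  obtain ⟨q, rfl⟩ := hgen b
  rw [← zpow_add, ← zpow_add, add_comm]

include hord hm0 in
lemma pow_val_inj {a b : ZMod m} (h : x ^ a.val = x ^ b.val) : a = b := by
  haveI : NeZero m := ⟨hm0.ne'⟩
  rw [pow_eq_pow_iff_modEq, hord] at h
  have ha := ZMod.val_lt a
  have hb := ZMod.val_lt b
  have : a.val = b.val := Nat.ModEq.eq_of_lt_of_lt h ha hb
  exact ZMod.val_injective m this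

include hgen hord hm0 in
lemma pow_ell_val (g : G) : x ^ (ell m x g).val = g := by
  haveI : NeZero m := ⟨hm0.ne'⟩
  have hex : ∃ j : ZMod m, (fun j : ZMod m => x ^ j.val) j = g := by
    obtain ⟨k, hk⟩ := hgen g
    refine ⟨(k : ZMod m), ?_⟩
    have h1 : ((((k : ZMod m)).val : ℤ) : ZMod m) = ((k : ℤ) : ZMod m) := by
      rw [Int.cast_natCast]
      exact ZMod.natCast_rightInverse (k : ZMod m)
    have h2 : (((k : ZMod m)).val : ℤ) ≡ k [ZMOD (m : ℕ)] :=
      (ZMod.intCast_eq_intCast_iff _ _ _).mp h1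
    have h3 : x ^ ((((k : ZMod m)).val : ℕ) : ℤ) = x ^ k := by
      rw [zpow_eq_zpow_iff_modEq, hord]
      exact h2
    rw [zpow_natCast] at h3
    exact h3.trans hk
  exact Function.invFun_eq hex

include hgen hord hm0 in
lemma ell_pow (n : ℕ) : ell m x (x ^ n) = (n : ZMod m) := by
  haveI : NeZero m := ⟨hm0.ne'⟩
  apply pow_val_inj hord hm0
  rw [pow_ell_val hgen hord hm0]
  rw [ZMod.val_natCast, ← hord, pow_mod_orderOf]

end WithHyp

end Aux
section Aux2

variable {G : Type*} [Group G]

section WithHyp2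

variable {m : ℕ} {x : G} (hgen : ∀ g : G, g ∈ Subgroup.zpowers x) (hord : orderOf x = m)
  (hm0 : 0 < m)

include hgen in
lemma out_mk (g : G) : Quotient.out (ConjClasses.mk g) = g := by
  have h1 : ConjClasses.mk (Quotient.out (ConjClasses.mk g)) = ConjClasses.mk g :=
    Quotient.out_eq _
  have h2 : IsConj (Quotient.out (ConjClasses.mk g)) g :=
    ConjClasses.mk_eq_mk_iff_isConj.mp h1
  obtain ⟨c, hc⟩ := isConj_iff.mp h2
  rw [comm_of_gen hgen c _, mul_inv_cancel_right] at hc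
  exact hc

lemma clsF_one : clsF G (1 : G) = 0 := by
  rw [clsF, clsC, dif_pos]
  exact mk_eq_one_iff.mpr rfl

omit hm0 in
include hord in
lemma pow_ne_one_of (n : ℕ) (h1 : 1 ≤ n) (h2 : n < m) : x ^ n ≠ 1 := by
  intro h
  have := orderOf_dvd_iff_pow_eq_one.mpr h
  rw [hord] at this
  have := Nat.le_of_dvd (by omega) this
  omega

include hgen hord hm0 in
lemma sHom_clsF_pow (n : ℕ) (h1 : 1 ≤ n) (h2 : n < m) :
    sHom m x (clsF G (x ^ n)) = (n : ℤ) := by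
  haveI : NeZero m := ⟨hm0.ne'⟩
  have hne : ConjClasses.mk (x ^ n) ≠ 1 := fun h =>
    pow_ne_one_of hord n h1 h2 (mk_eq_one_iff.mp h)
  rw [clsF, clsC, dif_neg hne, sHom]
  refine (FreeAbelianGroup.lift_apply_of _ (⟨_, hne⟩ : NCC G)).trans ?_
  rw [out_mk hgen, ell_pow hgen hord hm0, ZMod.val_cast_of_lt h2]

include hgen hord hm0 in
lemma UHom_clsF_pow (r : ℕ) (n : ℕ) (h1 : 1 ≤ n) (h2 : n < m) :
    UHom m r x (clsF G (x ^ n)) = uu m r n := by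
  haveI : NeZero m := ⟨hm0.ne'⟩
  have hne : ConjClasses.mk (x ^ n) ≠ 1 := fun h =>
    pow_ne_one_of hord n h1 h2 (mk_eq_one_iff.mp h)
  rw [clsF, clsC, dif_neg hne, UHom]
  refine (FreeAbelianGroup.lift_apply_of _ (⟨_, hne⟩ : NCC G)).trans ?_
  rw [out_mk hgen, ell_pow hgen hord hm0, ZMod.val_cast_of_lt h2]

/-- the ℤ →+ Additive (Abelianization G) hom n ↦ of (x ^ n) -/
noncomputable def zetaHom (x : G) : ℤ →+ Additive (Abelianization G) :=
  AddMonoidHom.mk' (fun n => Additive.ofMul (Abelianization.of (x ^ n))) (by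
    intro a b
    simp [zpow_add])

include hgen hord hm0 in
lemma phi_eq_zeta_s (v : FreeAbelianGroup (NCC G)) :
    phi G v = zetaHom x (sHom m x v) := by
  refine homext (phi G) ((zetaHom x).comp (sHom m x)) (fun c => ?_) v
  rw [phi_of]
  have h1 : c.1 = ConjClasses.mk (Quotient.out c.1) := (Quotient.out_eq _).symm
  rw [h1, classAb_mk]
  show _ = zetaHom x (sHom m x (FreeAbelianGroup.of c))
  rw [sHom, FreeAbelianGroup.lift_apply_of]
  show _ = Additive.ofMul (Abelianization.of (x ^ (((ell m x (Quotient.out c.1)).val : ℕ) : ℤ)))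
  rw [zpow_natCast, pow_ell_val hgen hord hm0]

include hgen hord hm0 in
lemma mem_ker_iff_dvd (v : FreeAbelianGroup (NCC G)) :
    v ∈ (phi G).ker ↔ (m : ℤ) ∣ sHom m x v := by
  letI : CommGroup G := { mul_comm := fun a b => comm_of_gen hgen a b }
  have hab : ∀ g : G, Abelianization.lift (MonoidHom.id G) (Abelianization.of g) = g := fun g =>
    Abelianization.lift_apply_of _ _
  rw [AddMonoidHom.mem_ker, phi_eq_zeta_s hgen hord hm0]
  constructor
  · intro h
    have h2 : Abelianization.of (x ^ sHom m x v) = 1 := h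
    have h3 : x ^ sHom m x v = 1 := by
      have := congrArg (Abelianization.lift (MonoidHom.id G)) h2
      rw [hab, map_one] at this
      exact this
    have h4 := orderOf_dvd_iff_zpow_eq_one.mpr h3
    rwa [hord] at h4
  · intro h
    have h' : ((orderOf x : ℕ) : ℤ) ∣ sHom m x v := by rw [hord]; exact h
    have h3 : x ^ sHom m x v = 1 := orderOf_dvd_iff_zpow_eq_one.mp h'
    show Additive.ofMul (Abelianization.of (x ^ sHom m x v)) = 0
    rw [h3, map_one]
    rfl

end WithHyp2

end Aux2
section Aux3

variable {G : Type*} [Group G]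

lemma uu_pair (m n : ℕ) (hm : m % 2 = 0) (h1 : 1 ≤ n) (h2 : n < m) (k : Fin (m / 2 - 1)) :
    uu m (m / 2 - 1) n k + uu m (m / 2 - 1) (m - n) k = 2 := by
  have hk := k.isLt
  unfold uu
  split_ifs <;> omega

section WithHyp3

variable {m : ℕ} {x : G} (hgen : ∀ g : G, g ∈ Subgroup.zpowers x) (hord : orderOf x = m)
  (hm0 : 0 < m) (hm2 : m % 2 = 0)

include hgen hord hm0 in
lemma exists_pow_rep (y : G) (hy : y ≠ 1) :
    ∃ n : ℕ, 1 ≤ n ∧ n < m ∧ y = x ^ n ∧ y⁻¹ = x ^ (m - n) := by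
  haveI : NeZero m := ⟨hm0.ne'⟩
  set n := (ell m x y).val with hn
  have hyx : y = x ^ n := (pow_ell_val hgen hord hm0 y).symm
  have hlt : n < m := ZMod.val_lt _
  have hpos : 1 ≤ n := by
    rcases Nat.eq_zero_or_pos n with h | h
    · exfalso; apply hy; rw [hyx, h, pow_zero]
    · exact h
  refine ⟨n, hpos, hlt, hyx, ?_⟩
  rw [hyx]
  apply inv_eq_of_mul_eq_one_right
  rw [← pow_add, show n + (m - n) = m by omega, ← hord, pow_orderOf_eq_one]

include hgen hord hm0 hm2 in
lemma PhiNum_NSub (v : FreeAbelianGroup (NCC G)) (hv : v ∈ NSub G) :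
    PhiNum m (m / 2 - 1) x v = 0 := by
  induction hv using AddSubgroup.closure_induction with
  | mem a ha =>
    obtain ⟨y, rfl⟩ := ha
    by_cases hy : y = 1
    · subst hy
      simp [clsF_one, inv_one]
    · obtain ⟨n, h1, h2, hyx, hyinv⟩ := exists_pow_rep hgen hord hm0 y hy
      have h1' : 1 ≤ m - n := by omega
      have h2' : m - n < m := by omega
      funext k
      rw [hyinv]
      rw [hyx]
      show PhiNum m (m / 2 - 1) x (clsF G (x ^ n) + clsF G (x ^ (m - n))) k = (0 : (Fin (m/2-1) → ℤ)) k
      rw [PhiNum_apply, map_add, map_add]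
      rw [sHom_clsF_pow hgen hord hm0 n h1 h2, sHom_clsF_pow hgen hord hm0 (m - n) h1' h2',
        UHom_clsF_pow hgen hord hm0 _ n h1 h2, UHom_clsF_pow hgen hord hm0 _ (m - n) h1' h2']
      show (n : ℤ) + (m - n : ℕ) - ((m / 2 : ℕ) : ℤ) *
        (uu m (m / 2 - 1) n k + uu m (m / 2 - 1) (m - n) k) = 0
      rw [uu_pair m n hm2 h1 h2 k]
      push_cast
      omega
  | zero => simp
  | add a b _ _ ha hb => rw [map_add, ha, hb, add_zero]
  | neg a _ ha => rw [map_neg, ha, neg_zero]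

end WithHyp3

end Aux3
section Aux4

variable {G : Type*} [Group G]

section WithHyp4

variable {m : ℕ} {x : G} (hgen : ∀ g : G, g ∈ Subgroup.zpowers x) (hord : orderOf x = m)
  (hm0 : 0 < m) (hm2 : m % 2 = 0)

include hgen hord hm0 hm2 in
lemma half_dvd_PhiNum (v : FreeAbelianGroup (NCC G)) (hv : v ∈ (phi G).ker)
    (k : Fin (m / 2 - 1)) : ((m / 2 : ℕ) : ℤ) ∣ PhiNum m (m / 2 - 1) x v k := by
  obtain ⟨t, ht⟩ := (mem_ker_iff_dvd hgen hord hm0 v).mp hv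
  have hm' : (m : ℤ) = 2 * ((m / 2 : ℕ) : ℤ) := by push_cast; omega
  refine ⟨2 * t - UHom m (m / 2 - 1) x v k, ?_⟩
  rw [PhiNum_apply, ht, hm']
  ring

/-- Φ on the kernel, with values in ℤ^(m/2-1). -/
noncomputable def PhiKer (m : ℕ) (x : G) (hgen : ∀ g : G, g ∈ Subgroup.zpowers x)
    (hord : orderOf x = m) (hm0 : 0 < m) (hm2 : m % 2 = 0) :
    (phi G).ker →+ (Fin (m / 2 - 1) → ℤ) :=
  AddMonoidHom.mk' (fun v k => PhiNum m (m / 2 - 1) x v.1 k / ((m / 2 : ℕ) : ℤ)) (by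
    intro a b
    funext k
    show PhiNum m (m / 2 - 1) x (a.1 + b.1) k / _ = _
    rw [map_add]
    show (PhiNum m (m / 2 - 1) x a.1 k + PhiNum m (m / 2 - 1) x b.1 k) / _ = _
    rw [Int.add_ediv_of_dvd_left (half_dvd_PhiNum hgen hord hm0 hm2 a.1 a.2 k)]
    rfl)

lemma PhiKer_apply (hgen : ∀ g : G, g ∈ Subgroup.zpowers x)
    (hord : orderOf x = m) (hm0 : 0 < m) (hm2 : m % 2 = 0) (v : (phi G).ker)
    (k : Fin (m / 2 - 1)) :
    PhiKer m x hgen hord hm0 hm2 v k = PhiNum m (m / 2 - 1) x v.1 k / ((m / 2 : ℕ) : ℤ) := rfl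

/-- Φbar on SOD. -/
noncomputable def PhiBar (m : ℕ) (x : G) (hgen : ∀ g : G, g ∈ Subgroup.zpowers x)
    (hord : orderOf x = m) (hm0 : 0 < m) (hm2 : m % 2 = 0) :
    SOD G →+ (Fin (m / 2 - 1) → ℤ) :=
  QuotientAddGroup.lift ((NSub G).addSubgroupOf (phi G).ker)
    (PhiKer m x hgen hord hm0 hm2) (by
      intro v hv
      rw [AddSubgroup.mem_addSubgroupOf] at hv
      have h0 := PhiNum_NSub hgen hord hm0 hm2 v.1 hv
      rw [AddMonoidHom.mem_ker]
      funext k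
      rw [PhiKer_apply, h0]
      simp)

include hgen hord hm0 hm2 in
lemma PhiBar_data (l : List G) (h : l.prod ∈ commutator G) :
    PhiBar m x hgen hord hm0 hm2 (data l h) = PhiKer m x hgen hord hm0 hm2 ⟨sumF l, sumF_mem_ker h⟩ := by
  rfl

end WithHyp4

end Aux4
section Aux5

variable {G : Type*} [Group G]

section WithHyp5

variable {m : ℕ} {x : G} (hgen : ∀ g : G, g ∈ Subgroup.zpowers x) (hord : orderOf x = m)
  (hm0 : 0 < m) (hm2 : m % 2 = 0)

include hgen hord hm0 in
lemma sHom_clsF_x (hm1 : 1 < m) : sHom m x (clsF G x) = 1 := by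
  have := sHom_clsF_pow hgen hord hm0 1 le_rfl hm1
  rwa [pow_one] at this

include hgen hord hm0 in
lemma UHom_clsF_x (r : ℕ) (hm1 : 1 < m) : UHom m r x (clsF G x) = uu m r 1 := by
  have := UHom_clsF_pow hgen hord hm0 r 1 le_rfl hm1
  rwa [pow_one] at this

include hgen hord hm0 hm2 in
lemma PhiBar_T (i : Fin (m / 2 - 1))
    (h : ([x, x ^ ((i : ℕ) + 1), x ^ (m - ((i : ℕ) + 1) - 1)] : List G).prod ∈ commutator G) :
    PhiBar m x hgen hord hm0 hm2 (data [x, x ^ ((i : ℕ) + 1), x ^ (m - ((i : ℕ) + 1) - 1)] h)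
      = Pi.single i 1 := by
  have hi := i.isLt
  have hm4 : 4 ≤ m := by omega
  have hb1 : 1 ≤ (i : ℕ) + 1 := by omega
  have hb2 : (i : ℕ) + 1 < m := by omega
  have hb3 : 1 ≤ m - ((i : ℕ) + 1) - 1 := by omega
  have hb4 : m - ((i : ℕ) + 1) - 1 < m := by omega
  rw [PhiBar_data]
  funext k
  have hk := k.isLt
  rw [PhiKer_apply, PhiNum_apply]
  simp only [show sumF [x, x ^ ((i : ℕ) + 1), x ^ (m - ((i : ℕ) + 1) - 1)]
      = clsF G x + (clsF G (x ^ ((i : ℕ) + 1)) + (clsF G (x ^ (m - ((i : ℕ) + 1) - 1)) + 0))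
      from by simp [sumF]]
  rw [map_add, map_add, map_add, map_add, map_add, map_add, map_zero, map_zero]
  rw [sHom_clsF_x hgen hord hm0 (by omega), UHom_clsF_x hgen hord hm0 _ (by omega),
    sHom_clsF_pow hgen hord hm0 _ hb1 hb2, UHom_clsF_pow hgen hord hm0 _ _ hb1 hb2,
    sHom_clsF_pow hgen hord hm0 _ hb3 hb4, UHom_clsF_pow hgen hord hm0 _ _ hb3 hb4]
  by_cases hki : k = i
  · subst hki
    have hS : uu m (m / 2 - 1) 1 k + (uu m (m / 2 - 1) ((k : ℕ) + 1) k
        + (uu m (m / 2 - 1) (m - ((k : ℕ) + 1) - 1) k + 0)) = 1 := by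
      unfold uu; split_ifs <;> omega
    have hA : (1 : ℤ) + ((((k : ℕ) + 1 : ℕ) : ℤ) + (((m - ((k : ℕ) + 1) - 1 : ℕ) : ℤ) + 0))
        - ((m / 2 : ℕ) : ℤ) * 1 = ((m / 2 : ℕ) : ℤ) * 1 := by
      push_cast
      omega
    simp only [Pi.add_apply, Pi.zero_apply]
    rw [hS, hA, Int.mul_ediv_cancel_left _ (by push_cast; omega : ((m / 2 : ℕ) : ℤ) ≠ 0)]
    simp
  · have hvne : (k : ℕ) ≠ (i : ℕ) := fun hh => hki (Fin.ext hh)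
    have hS : uu m (m / 2 - 1) 1 k + (uu m (m / 2 - 1) ((i : ℕ) + 1) k
        + (uu m (m / 2 - 1) (m - ((i : ℕ) + 1) - 1) k + 0)) = 2 := by
      unfold uu; split_ifs <;> omega
    have hA : (1 : ℤ) + ((((i : ℕ) + 1 : ℕ) : ℤ) + (((m - ((i : ℕ) + 1) - 1 : ℕ) : ℤ) + 0))
        - ((m / 2 : ℕ) : ℤ) * 2 = ((m / 2 : ℕ) : ℤ) * 0 := by
      push_cast
      omega
    simp only [Pi.add_apply, Pi.zero_apply]
    rw [hS, hA, Int.mul_ediv_cancel_left _ (by push_cast; omega : ((m / 2 : ℕ) : ℤ) ≠ 0)]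
    rw [Pi.single_apply]
    simp [hki]

end WithHyp5

end Aux5
section Aux6

variable {G : Type*} [Group G]

/-- the canonical projection onto SOD -/
noncomputable def piSOD : (phi G).ker →+ SOD G :=
  QuotientAddGroup.mk' ((NSub G).addSubgroupOf (phi G).ker)

lemma piSOD_eq_zero (v : (phi G).ker) (h : v.1 ∈ NSub G) : piSOD v = 0 := by
  have h2 : (QuotientAddGroup.mk v :
      (phi G).ker ⧸ ((NSub G).addSubgroupOf (phi G).ker)) = 0 :=
    (QuotientAddGroup.eq_zero_iff v).mpr (AddSubgroup.mem_addSubgroupOf.mpr h)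
  exact h2

/-- the basis elements as elements of SOD -/
noncomputable def Tcl (m : ℕ) (x : G) (hord : orderOf x = m) (hm0 : 0 < m) (hm2 : m % 2 = 0)
    (i : Fin (m / 2 - 1)) : SOD G :=
  data [x, x ^ ((i : ℕ) + 1), x ^ (m - ((i : ℕ) + 1) - 1)]
    (triple_pow_mem (n := m) (by rw [← hord]; exact pow_orderOf_eq_one x)
      (by have := i.isLt; omega))

section WithHyp6

variable {m : ℕ} {x : G} (hgen : ∀ g : G, g ∈ Subgroup.zpowers x) (hord : orderOf x = m)
  (hm0 : 0 < m) (hm2 : m % 2 = 0)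

include hgen hord hm0 in
lemma mem_ker_of_s_eq (v : FreeAbelianGroup (NCC G)) (h : sHom m x v = 0) : v ∈ (phi G).ker :=
  (mem_ker_iff_dvd hgen hord hm0 v).mpr (h ▸ dvd_zero _)

include hgen hord hm0 in
lemma mem_ker_of_s_eq_m (v : FreeAbelianGroup (NCC G)) (h : sHom m x v = (m : ℤ)) :
    v ∈ (phi G).ker :=
  (mem_ker_iff_dvd hgen hord hm0 v).mpr (h ▸ dvd_refl _)

include hgen hord hm0 in
lemma sHom_vj (j : ℕ) (hj : j < m) (hj1 : 1 ≤ j) (hm1 : 1 < m) :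
    sHom m x (clsF G (x ^ j) - (j : ℤ) • clsF G x) = 0 := by
  rw [map_sub, map_zsmul, sHom_clsF_pow hgen hord hm0 j hj1 hj, sHom_clsF_x hgen hord hm0 hm1]
  simp

include hgen hord hm0 hm2 in
lemma vj_mem_closure : ∀ j : ℕ, 1 ≤ j → j ≤ m / 2 →
    ∀ hv : clsF G (x ^ j) - (j : ℤ) • clsF G x ∈ (phi G).ker,
    piSOD (G := G) ⟨clsF G (x ^ j) - (j : ℤ) • clsF G x, hv⟩
      ∈ AddSubgroup.closure (Set.range (Tcl m x hord hm0 hm2)) := by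
  intro j
  induction j with
  | zero => intro hj1; exact absurd hj1 (by omega)
  | succ j ih =>
    intro hj1 hj hv
    have hm1 : 1 < m := by omega
    rcases Nat.eq_zero_or_pos j with hj0 | hj0
    · subst hj0
      have hz : (⟨clsF G (x ^ 1) - ((1 : ℕ) : ℤ) • clsF G x, hv⟩ : (phi G).ker) = 0 := by
        apply Subtype.ext
        show clsF G (x ^ 1) - ((1 : ℕ) : ℤ) • clsF G x = 0
        rw [pow_one]
        push_cast
        rw [one_zsmul, sub_self]
      rw [hz, map_zero]
      exact AddSubgroup.zero_mem _
    · -- j ≥ 1, j + 1 ≤ m / 2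
      have hjm : j < m := by omega
      have hvj : clsF G (x ^ j) - (j : ℤ) • clsF G x ∈ (phi G).ker :=
        mem_ker_of_s_eq hgen hord hm0 _ (sHom_vj hgen hord hm0 j hjm hj0 hm1)
      have hC := ih hj0 (by omega) hvj
      have hib : j - 1 < m / 2 - 1 := by omega
      set i : Fin (m / 2 - 1) := ⟨j - 1, hib⟩ with hidef
      have hiv : (i : ℕ) + 1 = j := by
        show j - 1 + 1 = j
        omega
      have htker : sumF [x, x ^ ((i : ℕ) + 1), x ^ (m - ((i : ℕ) + 1) - 1)] ∈ (phi G).ker := by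
        apply mem_ker_of_s_eq_m hgen hord hm0
        rw [show sumF [x, x ^ ((i : ℕ) + 1), x ^ (m - ((i : ℕ) + 1) - 1)]
            = clsF G x + (clsF G (x ^ ((i : ℕ) + 1)) + (clsF G (x ^ (m - ((i : ℕ) + 1) - 1)) + 0))
            from by simp [sumF]]
        rw [map_add, map_add, map_add, map_zero,
          sHom_clsF_x hgen hord hm0 hm1,
          sHom_clsF_pow hgen hord hm0 _ (by omega) (by omega),
          sHom_clsF_pow hgen hord hm0 _ (by omega) (by omega)]
        push_cast
        omega
      have hnker : clsF G (x ^ (j + 1)) + clsF G (x ^ (m - ((i : ℕ) + 1) - 1)) ∈ (phi G).ker := by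
        apply mem_ker_of_s_eq_m hgen hord hm0
        rw [map_add, sHom_clsF_pow hgen hord hm0 _ (by omega) (by omega),
          sHom_clsF_pow hgen hord hm0 _ (by omega) (by omega)]
        push_cast
        omega
      have hnN : clsF G (x ^ (j + 1)) + clsF G (x ^ (m - ((i : ℕ) + 1) - 1)) ∈ NSub G := by
        apply AddSubgroup.subset_closure
        refine ⟨x ^ (j + 1), ?_⟩
        have hinv : (x ^ (j + 1))⁻¹ = x ^ (m - ((i : ℕ) + 1) - 1) := by
          apply inv_eq_of_mul_eq_one_right
          rw [← pow_add, show (j + 1) + (m - ((i : ℕ) + 1) - 1) = m from by omega,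
            ← hord, pow_orderOf_eq_one]
        rw [hinv]
      have hdec : (⟨clsF G (x ^ (j + 1)) - ((j + 1 : ℕ) : ℤ) • clsF G x, hv⟩ : (phi G).ker)
          = ⟨_, hvj⟩ - ⟨_, htker⟩ + ⟨_, hnker⟩ := by
        apply Subtype.ext
        show clsF G (x ^ (j + 1)) - ((j + 1 : ℕ) : ℤ) • clsF G x
          = (clsF G (x ^ j) - (j : ℤ) • clsF G x)
            - sumF [x, x ^ ((i : ℕ) + 1), x ^ (m - ((i : ℕ) + 1) - 1)]
            + (clsF G (x ^ (j + 1)) + clsF G (x ^ (m - ((i : ℕ) + 1) - 1)))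
        rw [show sumF [x, x ^ ((i : ℕ) + 1), x ^ (m - ((i : ℕ) + 1) - 1)]
            = clsF G x + (clsF G (x ^ ((i : ℕ) + 1)) + (clsF G (x ^ (m - ((i : ℕ) + 1) - 1)) + 0))
            from by simp [sumF]]
        rw [hiv]
        push_cast
        module
      rw [hdec, map_add, map_sub]
      have hT : piSOD (G := G) ⟨_, htker⟩ = Tcl m x hord hm0 hm2 i := rfl
      have hN : piSOD (G := G) ⟨_, hnker⟩ = 0 := piSOD_eq_zero _ hnN
      rw [hT, hN, add_zero]
      exact AddSubgroup.sub_mem _ hC (AddSubgroup.subset_closure ⟨i, rfl⟩)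

end WithHyp6

end Aux6
section Aux7

variable {G : Type*} [Group G]

section WithHyp7

variable {m : ℕ} {x : G} (hgen : ∀ g : G, g ∈ Subgroup.zpowers x) (hord : orderOf x = m)
  (hm0 : 0 < m) (hm2 : m % 2 = 0)

include hgen hord hm0 hm2 in
lemma me1_mem_closure (hv : ((m : ℕ) : ℤ) • clsF G x ∈ (phi G).ker) :
    piSOD (G := G) ⟨((m : ℕ) : ℤ) • clsF G x, hv⟩
      ∈ AddSubgroup.closure (Set.range (Tcl m x hord hm0 hm2)) := by
  have hm1 : 1 < m := by omega
  have hh1 : 1 ≤ m / 2 := by omega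
  have hh2 : m / 2 < m := by omega
  have hvh : clsF G (x ^ (m / 2)) - ((m / 2 : ℕ) : ℤ) • clsF G x ∈ (phi G).ker :=
    mem_ker_of_s_eq hgen hord hm0 _ (sHom_vj hgen hord hm0 (m / 2) hh2 hh1 hm1)
  have hnk : clsF G (x ^ (m / 2)) + clsF G (x ^ (m / 2)) ∈ (phi G).ker := by
    apply mem_ker_of_s_eq_m hgen hord hm0
    rw [map_add, sHom_clsF_pow hgen hord hm0 _ hh1 hh2]
    push_cast
    omega
  have hnN : clsF G (x ^ (m / 2)) + clsF G (x ^ (m / 2)) ∈ NSub G := by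
    apply AddSubgroup.subset_closure
    refine ⟨x ^ (m / 2), ?_⟩
    have hinv : (x ^ (m / 2))⁻¹ = x ^ (m / 2) := by
      apply inv_eq_of_mul_eq_one_right
      rw [← pow_add, show m / 2 + m / 2 = m from by omega, ← hord, pow_orderOf_eq_one]
    rw [hinv]
  have hdec : (⟨((m : ℕ) : ℤ) • clsF G x, hv⟩ : (phi G).ker)
      = ⟨_, hnk⟩ - (2 : ℤ) • ⟨_, hvh⟩ := by
    apply Subtype.ext
    show ((m : ℕ) : ℤ) • clsF G x
      = (clsF G (x ^ (m / 2)) + clsF G (x ^ (m / 2)))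
        - (2 : ℤ) • (clsF G (x ^ (m / 2)) - ((m / 2 : ℕ) : ℤ) • clsF G x)
    have hmc : ((m : ℕ) : ℤ) = 2 * ((m / 2 : ℕ) : ℤ) := by push_cast; omega
    rw [hmc]
    module
  rw [hdec, map_sub, map_zsmul]
  refine AddSubgroup.sub_mem _ ?_ (AddSubgroup.zsmul_mem _ (vj_mem_closure hgen hord hm0 hm2 (m / 2) hh1 le_rfl hvh) 2)
  rw [piSOD_eq_zero _ hnN]
  exact AddSubgroup.zero_mem _

include hgen hord hm0 in
lemma sub_s_mem_ker (v : FreeAbelianGroup (NCC G)) (hm1 : 1 < m) :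
    v - sHom m x v • clsF G x ∈ (phi G).ker := by
  apply mem_ker_of_s_eq hgen hord hm0
  rw [map_sub, map_zsmul, sHom_clsF_x hgen hord hm0 hm1, smul_eq_mul, mul_one, sub_self]

/-- the reduction homomorphism -/
noncomputable def dHom (m : ℕ) (x : G) (hgen : ∀ g : G, g ∈ Subgroup.zpowers x)
    (hord : orderOf x = m) (hm0 : 0 < m) (hm1 : 1 < m) :
    FreeAbelianGroup (NCC G) →+ SOD G :=
  AddMonoidHom.mk' (fun v => piSOD ⟨v - sHom m x v • clsF G x,
    sub_s_mem_ker hgen hord hm0 v hm1⟩) (by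
      intro a b
      show piSOD ⟨(a + b) - sHom m x (a + b) • clsF G x, _⟩
        = piSOD ⟨a - sHom m x a • clsF G x, _⟩ + piSOD ⟨b - sHom m x b • clsF G x, _⟩
      rw [← map_add]
      congr 1
      apply Subtype.ext
      show (a + b) - sHom m x (a + b) • clsF G x
        = (a - sHom m x a • clsF G x) + (b - sHom m x b • clsF G x)
      rw [map_add]
      module)

include hgen hord hm0 hm2 in
lemma dHom_of_mem (hm1 : 1 < m) (c : NCC G) :
    dHom m x hgen hord hm0 hm1 (FreeAbelianGroup.of c)
      ∈ AddSubgroup.closure (Set.range (Tcl m x hord hm0 hm2)) := by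
  have hne : Quotient.out c.1 ≠ 1 := by
    intro h
    apply c.2
    have := Quotient.out_eq c.1
    rw [← this, h]
    exact mk_eq_one_iff.mpr rfl
  obtain ⟨n, h1, h2, hyx, hyinv⟩ := exists_pow_rep hgen hord hm0 (Quotient.out c.1) hne
  have hofc : FreeAbelianGroup.of c = clsF G (x ^ n) := by
    rw [clsF, ← hyx, clsC]
    rw [show ConjClasses.mk (Quotient.out c.1) = c.1 from Quotient.out_eq c.1]
    rw [dif_neg c.2]
    rfl
  have hsofc : sHom m x (FreeAbelianGroup.of c) = (n : ℤ) := by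
    rw [hofc]
    exact sHom_clsF_pow hgen hord hm0 n h1 h2
  have heq : dHom m x hgen hord hm0 hm1 (FreeAbelianGroup.of c)
      = piSOD (G := G) ⟨clsF G (x ^ n) - (n : ℤ) • clsF G x,
          mem_ker_of_s_eq hgen hord hm0 _ (sHom_vj hgen hord hm0 n h2 h1 hm1)⟩ := by
    show piSOD ⟨FreeAbelianGroup.of c - sHom m x (FreeAbelianGroup.of c) • clsF G x, _⟩ = _
    congr 1
    apply Subtype.ext
    show FreeAbelianGroup.of c - sHom m x (FreeAbelianGroup.of c) • clsF G x
      = clsF G (x ^ n) - (n : ℤ) • clsF G x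
    rw [hsofc, hofc]
  rw [heq]
  rcases le_or_gt n (m / 2) with hn | hn
  · exact vj_mem_closure hgen hord hm0 hm2 n h1 hn _
  · -- n > m / 2 : reduce to m - n
    have h1' : 1 ≤ m - n := by omega
    have h2' : m - n < m := by omega
    have hvmn : clsF G (x ^ (m - n)) - ((m - n : ℕ) : ℤ) • clsF G x ∈ (phi G).ker :=
      mem_ker_of_s_eq hgen hord hm0 _ (sHom_vj hgen hord hm0 (m - n) h2' h1' hm1)
    have hme1 : ((m : ℕ) : ℤ) • clsF G x ∈ (phi G).ker := by
      apply mem_ker_of_s_eq_m hgen hord hm0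
      rw [map_zsmul, sHom_clsF_x hgen hord hm0 hm1, smul_eq_mul, mul_one]
    have hnk : clsF G (x ^ n) + clsF G (x ^ (m - n)) ∈ (phi G).ker := by
      apply mem_ker_of_s_eq_m hgen hord hm0
      rw [map_add, sHom_clsF_pow hgen hord hm0 _ h1 h2, sHom_clsF_pow hgen hord hm0 _ h1' h2']
      push_cast
      omega
    have hnN : clsF G (x ^ n) + clsF G (x ^ (m - n)) ∈ NSub G := by
      apply AddSubgroup.subset_closure
      refine ⟨Quotient.out c.1, ?_⟩
      rw [hyinv, ← hyx]
    have hdec : (⟨clsF G (x ^ n) - (n : ℤ) • clsF G x,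
          mem_ker_of_s_eq hgen hord hm0 _ (sHom_vj hgen hord hm0 n h2 h1 hm1)⟩ : (phi G).ker)
        = -⟨_, hvmn⟩ - ⟨_, hme1⟩ + ⟨_, hnk⟩ := by
      apply Subtype.ext
      show clsF G (x ^ n) - (n : ℤ) • clsF G x
        = -(clsF G (x ^ (m - n)) - ((m - n : ℕ) : ℤ) • clsF G x)
          - ((m : ℕ) : ℤ) • clsF G x + (clsF G (x ^ n) + clsF G (x ^ (m - n)))
      rw [show ((m - n : ℕ) : ℤ) = ((m : ℕ) : ℤ) - (n : ℤ) from by push_cast; omega]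
      module
    rw [hdec, map_add, map_sub, map_neg]
    rw [piSOD_eq_zero ⟨_, hnk⟩ hnN]
    refine AddSubgroup.add_mem _ (AddSubgroup.sub_mem _ (AddSubgroup.neg_mem _ ?_) ?_)
      (AddSubgroup.zero_mem _)
    · exact vj_mem_closure hgen hord hm0 hm2 (m - n) h1' (by omega) hvmn
    · exact me1_mem_closure hgen hord hm0 hm2 hme1

include hgen hord hm0 hm2 in
lemma closure_Tcl_eq_top :
    AddSubgroup.closure (Set.range (Tcl m x hord hm0 hm2)) = (⊤ : AddSubgroup (SOD G)) := by
  have hm1 : 1 < m := by omega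
  rw [eq_top_iff]
  intro w _
  have hsurj : Function.Surjective (piSOD (G := G)) := QuotientAddGroup.mk'_surjective _
  obtain ⟨u, rfl⟩ := hsurj w
  -- decompose u
  obtain ⟨t, ht⟩ := (mem_ker_iff_dvd hgen hord hm0 u.1).mp u.2
  have hme1 : ((m : ℕ) : ℤ) • clsF G x ∈ (phi G).ker := by
    apply mem_ker_of_s_eq_m hgen hord hm0
    rw [map_zsmul, sHom_clsF_x hgen hord hm0 hm1, smul_eq_mul, mul_one]
  have hu : u = ⟨u.1 - sHom m x u.1 • clsF G x, sub_s_mem_ker hgen hord hm0 u.1 hm1⟩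
      + t • ⟨((m : ℕ) : ℤ) • clsF G x, hme1⟩ := by
    apply Subtype.ext
    show u.1 = (u.1 - sHom m x u.1 • clsF G x) + t • (((m : ℕ) : ℤ) • clsF G x)
    rw [ht]
    module
  rw [hu, map_add, map_zsmul]
  refine AddSubgroup.add_mem _ ?_
    (AddSubgroup.zsmul_mem _ (me1_mem_closure hgen hord hm0 hm2 hme1) t)
  have hd : piSOD (G := G) ⟨u.1 - sHom m x u.1 • clsF G x, sub_s_mem_ker hgen hord hm0 u.1 hm1⟩
      = dHom m x hgen hord hm0 hm1 u.1 := rfl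
  rw [hd]
  refine FreeAbelianGroup.induction_on u.1 ?_ ?_ ?_ ?_
  · rw [map_zero]; exact AddSubgroup.zero_mem _
  · intro c; exact dHom_of_mem hgen hord hm0 hm2 hm1 c
  · intro c hc; rw [map_neg]; exact AddSubgroup.neg_mem _ hc
  · intro a b ha hb; rw [map_add]; exact AddSubgroup.add_mem _ ha hb

end WithHyp7

end Aux7
/-- for `G = C_m`, `m` even, with generator `x`, the group `𝔹_G` is free
abelian of rank `m/2 - 1` with basis `[x, x^i, x^(m-i-1)]`, `i = 1, …, m/2 - 1`. -/
theorem stmt5 (m : ℕ) (hm : Even m) (G : Type*) [Group G] [Fintype G] (x : G)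
    (hgen : ∀ g : G, g ∈ Subgroup.zpowers x) (hcard : Fintype.card G = m) :
    ∃ b : Module.Basis (Fin (m / 2 - 1)) ℤ (SOD G), ∀ i : Fin (m / 2 - 1),
      b i = data [x, x ^ ((i : ℕ) + 1), x ^ (m - ((i : ℕ) + 1) - 1)]
        (triple_pow_mem (n := m) (by rw [← hcard]; exact pow_card_eq_one)
          (by have := i.isLt; omega)) := by
  have hord : orderOf x = m := by
    rw [orderOf_eq_card_of_forall_mem_zpowers hgen, Nat.card_eq_fintype_card, hcard]
  have hm0 : 0 < m := by rw [← hcard]; exact Fintype.card_pos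
  have hm2 : m % 2 = 0 := Nat.even_iff.mp hm
  -- the inverse homomorphism
  let Psi : (Fin (m / 2 - 1) → ℤ) →+ SOD G :=
    AddMonoidHom.mk' (fun c => ∑ i, c i • Tcl m x hord hm0 hm2 i) (by
      intro a b
      show ∑ i, (a i + b i) • Tcl m x hord hm0 hm2 i = _
      rw [← Finset.sum_add_distrib]
      exact Finset.sum_congr rfl fun i _ => add_smul _ _ _)
  have hPsi_single : ∀ i : Fin (m / 2 - 1), Psi (Pi.single i 1) = Tcl m x hord hm0 hm2 i := by
    intro i
    show ∑ j, (Pi.single i (1 : ℤ) : Fin (m / 2 - 1) → ℤ) j • Tcl m x hord hm0 hm2 j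
      = Tcl m x hord hm0 hm2 i
    rw [Finset.sum_eq_single i]
    · rw [Pi.single_eq_same, one_smul]
    · intro j _ hj
      rw [Pi.single_eq_of_ne hj, zero_smul]
    · intro h
      exact absurd (Finset.mem_univ i) h
  have hPhiPsi : ∀ c, PhiBar m x hgen hord hm0 hm2 (Psi c) = c := by
    intro c
    show PhiBar m x hgen hord hm0 hm2 (∑ i, c i • Tcl m x hord hm0 hm2 i) = c
    rw [map_sum]
    have hterm : ∀ i : Fin (m / 2 - 1),
        PhiBar m x hgen hord hm0 hm2 (c i • Tcl m x hord hm0 hm2 i) = Pi.single i (c i) := by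
      intro i
      rw [map_zsmul]
      rw [show PhiBar m x hgen hord hm0 hm2 (Tcl m x hord hm0 hm2 i) = Pi.single i 1 from
        PhiBar_T hgen hord hm0 hm2 i _]
      funext j
      rcases eq_or_ne j i with h | h
      · subst h; simp
      · simp [Pi.single_eq_of_ne h]
    rw [Finset.sum_congr rfl fun i _ => hterm i]
    exact Finset.univ_sum_single c
  have hinj : Function.Injective Psi := by
    intro a b h
    have := congrArg (PhiBar m x hgen hord hm0 hm2) h
    rwa [hPhiPsi, hPhiPsi] at this
  have hsurj : Function.Surjective Psi := by
    intro w
    have hw : w ∈ AddSubgroup.closure (Set.range (Tcl m x hord hm0 hm2)) := by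
      rw [closure_Tcl_eq_top hgen hord hm0 hm2]
      trivial
    have hle : AddSubgroup.closure (Set.range (Tcl m x hord hm0 hm2)) ≤ Psi.range := by
      rw [AddSubgroup.closure_le]
      rintro _ ⟨i, rfl⟩
      exact ⟨Pi.single i 1, hPsi_single i⟩
    obtain ⟨c, hc⟩ := hle hw
    exact ⟨c, hc⟩
  let E : (Fin (m / 2 - 1) → ℤ) ≃+ SOD G := AddEquiv.ofBijective Psi ⟨hinj, hsurj⟩
  refine ⟨(Pi.basisFun ℤ (Fin (m / 2 - 1))).map E.toIntLinearEquiv, fun i => ?_⟩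
  rw [Module.Basis.map_apply, Pi.basisFun_apply]
  show E (Pi.single i 1) = _
  show Psi (Pi.single i 1) = _
  rw [hPsi_single i]
  rfl

end SingOrbit
end

section
/- For a finite group G, every element α of 𝔹_G satisfies 2α = 0 if and only if every element of G is conjugate to its inverse. -/
namespace SingOrbit

variable (G : Type*) [Group G]

variable {G}

lemma isConj_inv_iff {x g : G} : IsConj x⁻¹ g ↔ IsConj x g⁻¹ := by
  rw [isConj_iff, isConj_iff]
  constructor
  · rintro ⟨c, hc⟩
    exact ⟨c, by rw [← hc]; group⟩
  · rintro ⟨c, hc⟩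
    exact ⟨c, by rw [← inv_inv g, ← hc]; group⟩

lemma two_smul_mem_NSub (h : ∀ g : G, IsConj g g⁻¹) (f : FreeAbelianGroup (NCC G)) :
    2 • f ∈ NSub G := by
  induction f using FreeAbelianGroup.induction_on with
  | zero => simpa using (NSub G).zero_mem
  | of c =>
    obtain ⟨g, hg⟩ := Quotient.exists_rep c.1
    have hg1 : ConjClasses.mk g ≠ 1 := by rw [show ConjClasses.mk g = c.1 from hg]; exact c.2
    have h1 : clsF G g = FreeAbelianGroup.of c := by
      rw [clsF, clsC, dif_neg hg1]
      congr 1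
      exact Subtype.ext hg
    have h2 : clsF G g⁻¹ = FreeAbelianGroup.of c := by
      have : ConjClasses.mk g⁻¹ = ConjClasses.mk g :=
        ConjClasses.mk_eq_mk_iff_isConj.mpr (h g).symm
      rw [clsF, this, ← clsF, h1]
    have : 2 • FreeAbelianGroup.of c = clsF G g + clsF G g⁻¹ := by
      rw [h1, h2, two_nsmul]
    rw [this]
    exact AddSubgroup.subset_closure ⟨g, rfl⟩
  | neg f hf =>
    rw [smul_neg]
    exact (NSub G).neg_mem hf
  | add f₁ f₂ h₁ h₂ =>
    rw [smul_add]
    exact (NSub G).add_mem h₁ h₂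

open Classical in
/-- The difference of coordinates at `ĝ` and `ĝ⁻¹`. -/
noncomputable def psi (g : G) : FreeAbelianGroup (NCC G) →+ ℤ :=
  FreeAbelianGroup.lift fun c =>
    (if c.1 = ConjClasses.mk g then (1 : ℤ) else 0) -
      (if c.1 = ConjClasses.mk g⁻¹ then (1 : ℤ) else 0)

open Classical in
lemma psi_clsF (g x : G) (hg : g ≠ 1) :
    psi g (clsF G x) = (if ConjClasses.mk x = ConjClasses.mk g then (1 : ℤ) else 0) -
      (if ConjClasses.mk x = ConjClasses.mk g⁻¹ then (1 : ℤ) else 0) := by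
  rw [clsF, clsC]
  by_cases h : ConjClasses.mk x = 1
  · rw [dif_pos h, map_zero,
      if_neg (fun h1 => hg (mk_eq_one_iff.mp (h1.symm.trans h))),
      if_neg (fun h2 => hg (inv_eq_one.mp (mk_eq_one_iff.mp (h2.symm.trans h))))]
    ring
  · rw [dif_neg h, psi]; exact FreeAbelianGroup.lift_apply_of _ _

open Classical in
lemma psi_eq_zero_of_mem_NSub {g : G} (hg : g ≠ 1) {f : FreeAbelianGroup (NCC G)}
    (hf : f ∈ NSub G) : psi g f = 0 := by
  classical
  have : NSub G ≤ (psi g).ker := by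
    rw [NSub, AddSubgroup.closure_le]
    rintro a ⟨x, rfl⟩
    have h1 : ConjClasses.mk x⁻¹ = ConjClasses.mk g ↔ ConjClasses.mk x = ConjClasses.mk g⁻¹ := by
      rw [ConjClasses.mk_eq_mk_iff_isConj, ConjClasses.mk_eq_mk_iff_isConj, isConj_inv_iff]
    have h2 : ConjClasses.mk x⁻¹ = ConjClasses.mk g⁻¹ ↔ ConjClasses.mk x = ConjClasses.mk g := by
      rw [ConjClasses.mk_eq_mk_iff_isConj, ConjClasses.mk_eq_mk_iff_isConj, ← isConj_inv_iff,
        inv_inv]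
    simp only [SetLike.mem_coe, AddMonoidHom.mem_ker, map_add, psi_clsF g _ hg]
    rw [if_congr h1 rfl rfl, if_congr h2 rfl rfl]
    ring
  exact this hf

/-- `𝔹_G` consists of elements of order dividing two if and only if every
element of `G` is conjugate to its inverse. -/
theorem stmt16 (G : Type*) [Group G] [Finite G] :
    (∀ α : SOD G, 2 • α = 0) ↔ (∀ g : G, IsConj g g⁻¹) := by
  classical
  constructor
  · intro h g
    by_contra hng
    have hg1 : g ≠ 1 := by rintro rfl; exact hng (by simp)
    set n := orderOf g with hn
    have hf : (n • clsF G g) ∈ (phi G).ker := by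
      rw [AddMonoidHom.mem_ker, map_nsmul, phi_clsF]
      have : (Abelianization.of g) ^ n = 1 := by
        rw [← map_pow, pow_orderOf_eq_one, map_one]
      calc n • Additive.ofMul (Abelianization.of g)
          = Additive.ofMul ((Abelianization.of g) ^ n) := rfl
        _ = 0 := by rw [this]; rfl
    have h2α : 2 • (QuotientAddGroup.mk ⟨n • clsF G g, hf⟩ : (phi G).ker ⧸ ((NSub G).addSubgroupOf (phi G).ker)) = 0 :=
      h (QuotientAddGroup.mk ⟨n • clsF G g, hf⟩)
    rw [two_nsmul, ← QuotientAddGroup.mk_add, QuotientAddGroup.eq_zero_iff,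
      AddSubgroup.mem_addSubgroupOf] at h2α
    have hmem : (2 * n) • clsF G g ∈ NSub G := by
      have : ((⟨n • clsF G g, hf⟩ + ⟨n • clsF G g, hf⟩ :
          (phi G).ker) : FreeAbelianGroup (NCC G)) = (2 * n) • clsF G g := by
        push_cast
        rw [two_mul, add_smul]
      rwa [this] at h2α
    have hpsi := psi_eq_zero_of_mem_NSub hg1 hmem
    rw [map_nsmul, psi_clsF g g hg1, if_pos rfl, if_neg
      (fun hc => hng (ConjClasses.mk_eq_mk_iff_isConj.mp hc))] at hpsi
    have hn0 : n ≠ 0 := (orderOf_pos g).ne'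
    simp only [sub_zero, nsmul_eq_mul, mul_one] at hpsi
    exact (by positivity : (0 : ℤ) < 2 * n).ne' (by exact_mod_cast hpsi)
  · intro h α
    induction α using QuotientAddGroup.induction_on with
    | H x =>
      suffices hs : 2 • (QuotientAddGroup.mk x : (phi G).ker ⧸ ((NSub G).addSubgroupOf (phi G).ker)) = 0 from hs
      rw [two_nsmul, ← QuotientAddGroup.mk_add, QuotientAddGroup.eq_zero_iff,
        AddSubgroup.mem_addSubgroupOf]
      have : ((x + x : (phi G).ker) : FreeAbelianGroup (NCC G)) = 2 • (x : FreeAbelianGroup (NCC G)) := by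
        push_cast
        rw [two_nsmul]
      rw [this]
      exact two_smul_mem_NSub h _

end SingOrbit
end
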